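/- Let Ψ : (0,∞)^M → ℝ be twice differentiable. If Ψ is convex, then the Ψ-induced scoring rule λ^Ψ is proper on Δ°, i.e. ⟨η*, λ^Ψ(η̂)⟩ ≥ ⟨η*, λ^Ψ(η*)⟩ for all η̂, η* ∈ Δ°. If Ψ is strictly convex, then λ^Ψ is strictly proper on Δ°, i.e. the inequality is an equality only when η̂ = η*. -/

import Mathlib

open scoped BigOperators

/-- The interior of the standard probability simplex in `ℝ^{M+1}`. -/
def posSimplex (M : ℕ) : Set (Fin (M + 1) → ℝ) :=
  {η | (∀ i, 0 < η i) ∧ ∑ i, η i = 1}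

/-- `ρ(η) = (η_1/η_0, …, η_M/η_0)`. -/
noncomputable def rhoOf (M : ℕ) (η : Fin (M + 1) → ℝ) : Fin M → ℝ :=
  fun z => η z.succ / η 0

/-- The `Ψ`-induced scoring rule: `λ^Ψ_0(η) = ⟨ρ, ∇Ψ(ρ)⟩ − Ψ(ρ)` and
`λ^Ψ_z(η) = −(∇Ψ(ρ))_z` for `z = 1, …, M`, where `ρ = ρ(η)`. -/
noncomputable def inducedRule (M : ℕ) (Ψ : (Fin M → ℝ) → ℝ)
    (η : Fin (M + 1) → ℝ) : Fin (M + 1) → ℝ :=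
  Fin.cons
    ((∑ z, rhoOf M η z * fderiv ℝ Ψ (rhoOf M η) (Pi.single z 1)) - Ψ (rhoOf M η))
    (fun z => - fderiv ℝ Ψ (rhoOf M η) (Pi.single z 1))

open AffineMap
section Bregman

variable {M : ℕ} {Ψ : (Fin M → ℝ) → ℝ}

/-- Derivative of `Ψ` along the line from `x` to `y`, at `0`. -/
lemma hasDerivAt_comp_lineMap (x y : Fin M → ℝ) (hx : DifferentiableAt ℝ Ψ x) :
    HasDerivAt (fun t : ℝ => Ψ (AffineMap.lineMap x y t)) (fderiv ℝ Ψ x (y - x)) 0 := by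
  have hγ : HasDerivAt (fun t : ℝ => t • (y - x) + x) (y - x) 0 := by
    simpa using ((hasDerivAt_id (0 : ℝ)).smul_const (y - x)).add_const x
  have h0 : (0 : ℝ) • (y - x) + x = x := by simp
  have hF : HasFDerivAt Ψ (fderiv ℝ Ψ x) ((0 : ℝ) • (y - x) + x) := by
    rw [h0]; exact hx.hasFDerivAt
  have := hF.comp_hasDerivAt 0 hγ
  simpa [AffineMap.lineMap_apply_module', Function.comp_def] using this

lemma convexOn_comp_lineMap {s : Set (Fin M → ℝ)} (hf : ConvexOn ℝ s Ψ) (x y : Fin M → ℝ) :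
    ConvexOn ℝ ((AffineMap.lineMap x y : ℝ →ᵃ[ℝ] (Fin M → ℝ)) ⁻¹' s)
      (fun t : ℝ => Ψ (AffineMap.lineMap x y t)) :=
  hf.comp_affineMap _

lemma strictConvexOn_comp_lineMap {s : Set (Fin M → ℝ)} (hf : StrictConvexOn ℝ s Ψ)
    {x y : Fin M → ℝ} (hxy : x ≠ y) :
    StrictConvexOn ℝ ((AffineMap.lineMap x y : ℝ →ᵃ[ℝ] (Fin M → ℝ)) ⁻¹' s)
      (fun t : ℝ => Ψ (AffineMap.lineMap x y t)) := by
  constructor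
  · exact hf.1.affine_preimage _
  · intro a ha b hb hab t u ht hu htu
    have hne : (AffineMap.lineMap x y a : Fin M → ℝ) ≠ AffineMap.lineMap x y b := by
      intro h
      apply hab
      have h' : (a - b) • (y - x) = 0 := by
        have := h
        simp only [AffineMap.lineMap_apply_module'] at this
        have : a • (y - x) = b • (y - x) := by
          have := congrArg (fun v => v - x) this
          simpa using this
        rw [sub_smul, this, sub_self]
      rcases smul_eq_zero.mp h' with h1 | h2
      · linarith [sub_eq_zero.mp h1]
      · exact absurd (sub_eq_zero.mp h2).symm hxy
    have key := hf.2 ha hb hne ht hu htu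
    have hmap : (AffineMap.lineMap x y (t * a + u * b) : Fin M → ℝ)
        = t • (AffineMap.lineMap x y a : Fin M → ℝ) + u • (AffineMap.lineMap x y b) := by
      simp only [AffineMap.lineMap_apply_module']
      have hu' : u = 1 - t := by linarith
      subst hu'
      module
    simp only [smul_eq_mul] at key ⊢
    rw [hmap]
    simpa using key

lemma bregman_le {s : Set (Fin M → ℝ)} (hf : ConvexOn ℝ s Ψ)
    {x y : Fin M → ℝ} (hx : x ∈ s) (hy : y ∈ s) (hdx : DifferentiableAt ℝ Ψ x) :
    fderiv ℝ Ψ x (y - x) ≤ Ψ y - Ψ x := by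
  rcases eq_or_ne x y with rfl | hxy
  · simp
  · have hg := convexOn_comp_lineMap hf x y
    have h0 : (0 : ℝ) ∈ (AffineMap.lineMap x y : ℝ →ᵃ[ℝ] (Fin M → ℝ)) ⁻¹' s := by
      simp [Set.mem_preimage, hx]
    have h1 : (1 : ℝ) ∈ (AffineMap.lineMap x y : ℝ →ᵃ[ℝ] (Fin M → ℝ)) ⁻¹' s := by
      simp [Set.mem_preimage, hy]
    have := hg.le_slope_of_hasDerivAt h0 h1 one_pos (hasDerivAt_comp_lineMap x y hdx)
    simpa [slope_def_field] using this

lemma bregman_lt {s : Set (Fin M → ℝ)} (hf : StrictConvexOn ℝ s Ψ)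
    {x y : Fin M → ℝ} (hx : x ∈ s) (hy : y ∈ s) (hxy : x ≠ y)
    (hdx : DifferentiableAt ℝ Ψ x) :
    fderiv ℝ Ψ x (y - x) < Ψ y - Ψ x := by
  have hg := strictConvexOn_comp_lineMap hf hxy
  have h0 : (0 : ℝ) ∈ (AffineMap.lineMap x y : ℝ →ᵃ[ℝ] (Fin M → ℝ)) ⁻¹' s := by
    simp [Set.mem_preimage, hx]
  have h1 : (1 : ℝ) ∈ (AffineMap.lineMap x y : ℝ →ᵃ[ℝ] (Fin M → ℝ)) ⁻¹' s := by
    simp [Set.mem_preimage, hy]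
  have := hg.lt_slope_of_hasDerivAt h0 h1 one_pos (hasDerivAt_comp_lineMap x y hdx)
  simpa [slope_def_field] using this

end Bregman

lemma sum_single_apply {M : ℕ} (L : (Fin M → ℝ) →L[ℝ] ℝ) (ρ : Fin M → ℝ) :
    ∑ z, ρ z * L (Pi.single z 1) = L ρ := by
  have hρ : ρ = ∑ z, ρ z • (Pi.single z 1 : Fin M → ℝ) := by
    funext i
    simp [Finset.sum_apply, Pi.single_apply, mul_comm]
  conv_rhs => rw [hρ]
  rw [map_sum]
  simp [smul_eq_mul]

lemma rhoOf_pos {M : ℕ} {η : Fin (M + 1) → ℝ} (hη : η ∈ posSimplex M) :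
    ∀ i, 0 < rhoOf M η i :=
  fun i => div_pos (hη.1 _) (hη.1 0)

lemma succ_eq_rho_mul {M : ℕ} {η : Fin (M + 1) → ℝ} (hη : η ∈ posSimplex M) (z : Fin M) :
    η z.succ = rhoOf M η z * η 0 := by
  rw [rhoOf, div_mul_cancel₀]
  exact (hη.1 0).ne'

lemma rhoOf_injOn {M : ℕ} {ηh ηs : Fin (M + 1) → ℝ}
    (hh : ηh ∈ posSimplex M) (hs : ηs ∈ posSimplex M)
    (hρ : rhoOf M ηh = rhoOf M ηs) : ηh = ηs := by
  have key : ∀ η : Fin (M + 1) → ℝ, η ∈ posSimplex M →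
      η 0 * (1 + ∑ z, rhoOf M η z) = 1 := by
    intro η hη
    have := hη.2
    rw [Fin.sum_univ_succ] at this
    calc η 0 * (1 + ∑ z, rhoOf M η z) = η 0 + ∑ z, rhoOf M η z * η 0 := by
          rw [mul_add, mul_one, Finset.mul_sum]
          congr 1
          exact Finset.sum_congr rfl fun z _ => mul_comm _ _
      _ = η 0 + ∑ z : Fin M, η z.succ := by
          congr 1; exact Finset.sum_congr rfl fun z _ => (succ_eq_rho_mul hη z).symm
      _ = 1 := this
  have h0 : ηh 0 = ηs 0 := by
    have h1 := key ηh hh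
    have h2 := key ηs hs
    rw [hρ] at h1
    have hpos : 0 < 1 + ∑ z, rhoOf M ηs z := by
      have : 0 ≤ ∑ z, rhoOf M ηs z :=
        Finset.sum_nonneg fun z _ => (rhoOf_pos hs z).le
      linarith
    have := h1.trans h2.symm
    exact mul_right_cancel₀ hpos.ne' this
  funext i
  refine Fin.cases h0 (fun z => ?_) i
  rw [succ_eq_rho_mul hh z, succ_eq_rho_mul hs z, hρ, h0]

lemma score_eq {M : ℕ} (Ψ : (Fin M → ℝ) → ℝ) {ηs ηh : Fin (M + 1) → ℝ}
    (hs : ηs ∈ posSimplex M) (hh : ηh ∈ posSimplex M) :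
    ∑ i, ηs i * inducedRule M Ψ ηh i
      = ηs 0 * (fderiv ℝ Ψ (rhoOf M ηh) (rhoOf M ηh) - Ψ (rhoOf M ηh)
          - fderiv ℝ Ψ (rhoOf M ηh) (rhoOf M ηs)) := by
  rw [Fin.sum_univ_succ]
  simp only [inducedRule, Fin.cons_zero, Fin.cons_succ]
  rw [sum_single_apply]
  have : ∑ z, ηs z.succ * -(fderiv ℝ Ψ (rhoOf M ηh)) (Pi.single z 1)
      = -(ηs 0 * fderiv ℝ Ψ (rhoOf M ηh) (rhoOf M ηs)) := by
    rw [← sum_single_apply (fderiv ℝ Ψ (rhoOf M ηh)) (rhoOf M ηs), Finset.mul_sum,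
      ← Finset.sum_neg_distrib]
    refine Finset.sum_congr rfl fun z _ => ?_
    rw [succ_eq_rho_mul hs z]
    ring
  rw [this]
  ring

/-- for twice differentiable `Ψ : (0,∞)^M → ℝ`, if `Ψ` is convex then `λ^Ψ` is
proper on `Δ°`, and if `Ψ` is strictly convex then `λ^Ψ` is strictly proper on `Δ°`. -/
theorem inducedRule_proper_of_convex
    (M : ℕ) (hM : 1 ≤ M)
    (Ψ : (Fin M → ℝ) → ℝ)
    (hΨ : ∀ ρ : Fin M → ℝ, (∀ i, 0 < ρ i) → DifferentiableAt ℝ Ψ ρ)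
    (hΨ' : ∀ ρ : Fin M → ℝ, (∀ i, 0 < ρ i) → DifferentiableAt ℝ (fderiv ℝ Ψ) ρ) :
    (ConvexOn ℝ {ρ : Fin M → ℝ | ∀ i, 0 < ρ i} Ψ →
      ∀ ηs ∈ posSimplex M, ∀ ηh ∈ posSimplex M,
        (∑ i, ηs i * inducedRule M Ψ ηs i) ≤ ∑ i, ηs i * inducedRule M Ψ ηh i)
    ∧ (StrictConvexOn ℝ {ρ : Fin M → ℝ | ∀ i, 0 < ρ i} Ψ →
        (∀ ηs ∈ posSimplex M, ∀ ηh ∈ posSimplex M,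
          (∑ i, ηs i * inducedRule M Ψ ηs i) ≤ ∑ i, ηs i * inducedRule M Ψ ηh i)
        ∧ (∀ ηs ∈ posSimplex M, ∀ ηh ∈ posSimplex M,
            (∑ i, ηs i * inducedRule M Ψ ηh i) = (∑ i, ηs i * inducedRule M Ψ ηs i) →
            ηh = ηs)) := by
  have proper : ConvexOn ℝ {ρ : Fin M → ℝ | ∀ i, 0 < ρ i} Ψ →
      ∀ ηs ∈ posSimplex M, ∀ ηh ∈ posSimplex M,
        (∑ i, ηs i * inducedRule M Ψ ηs i) ≤ ∑ i, ηs i * inducedRule M Ψ ηh i := by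
    intro hconv ηs hs ηh hh
    rw [score_eq Ψ hs hs, score_eq Ψ hs hh]
    have hρs : rhoOf M ηs ∈ {ρ : Fin M → ℝ | ∀ i, 0 < ρ i} := rhoOf_pos hs
    have hρh : rhoOf M ηh ∈ {ρ : Fin M → ℝ | ∀ i, 0 < ρ i} := rhoOf_pos hh
    have hb := bregman_le hconv hρh hρs (hΨ _ hρh)
    rw [map_sub] at hb
    have h0 : (0 : ℝ) < ηs 0 := hs.1 0
    apply mul_le_mul_of_nonneg_left _ h0.le
    linarith
  refine ⟨proper, fun hstrict => ⟨proper hstrict.convexOn, ?_⟩⟩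
  intro ηs hs ηh hh heq
  by_contra hne
  have hρne : rhoOf M ηh ≠ rhoOf M ηs := fun h => hne (rhoOf_injOn hh hs h)
  have hρs : rhoOf M ηs ∈ {ρ : Fin M → ℝ | ∀ i, 0 < ρ i} := rhoOf_pos hs
  have hρh : rhoOf M ηh ∈ {ρ : Fin M → ℝ | ∀ i, 0 < ρ i} := rhoOf_pos hh
  have hb := bregman_lt hstrict hρh hρs hρne (hΨ _ hρh)
  rw [map_sub] at hb
  rw [score_eq Ψ hs hh, score_eq Ψ hs hs] at heq
  have h0 : (0 : ℝ) < ηs 0 := hs.1 0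
  have := mul_left_cancel₀ h0.ne' heq
  linarith
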